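/- In the Thorup-Zwick random sampling, where each vertex of A_{i-1} is placed in A_i independently with probability p = n^{-1/k}, the expected size of B_i(u) for any fixed vertex u and any 0 ≤ i ≤ k-2 is at most 1/p = n^{1/k}. Consequently, the expected total bunch size satisfies E[|B(u)|] ≤ k·n^{1/k} + E[|A_{k-1}|]. -/

import Mathlib

open MeasureTheory ENNReal
open scoped Classical

/-- The distance from `u` to a finite set `S` of vertices (`⊤` if `S` is empty). -/
noncomputable def distToFinset {V : Type*} (d : V → V → ℝ≥0∞) (S : Finset V) (u : V) : ℝ≥0∞ :=
  ⨅ x ∈ S, d u x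

section Aux

variable {V Ω : Type*} [Fintype V] [MeasurableSpace Ω]

/-- A function of a finitely-valued map with measurable fibers is measurable. -/
lemma tz_measurable_of_fin {α : Type*} [Fintype α] (g : Ω → α)
    (hg : ∀ a, MeasurableSet {ω | g ω = a}) (F : α → ℝ≥0∞) :
    Measurable fun ω => F (g ω) := by
  intro s _
  have h : (fun ω => F (g ω)) ⁻¹' s
      = ⋃ a ∈ Finset.univ.filter (fun a => F a ∈ s), {ω | g ω = a} := by
    ext ω
    simp [Set.mem_preimage]
  rw [h]
  exact Finset.measurableSet_biUnion _ fun a _ => hg a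

variable (sample : ℕ × V → Ω → Bool) (A : ℕ → Ω → Finset V)

lemma tz_memA (hA0 : ∀ ω, A 0 ω = Finset.univ)
    (hAsucc : ∀ i ω v, v ∈ A (i + 1) ω ↔ v ∈ A i ω ∧ sample (i + 1, v) ω = true) :
    ∀ i ω x, x ∈ A i ω ↔ ∀ l ∈ Finset.Icc 1 i, sample (l, x) ω = true := by
  intro i
  induction i with
  | zero => intro ω x; simp [hA0]
  | succ i ih =>
    intro ω x
    rw [hAsucc]
    constructor
    · rintro ⟨h1, h2⟩ l hl
      rcases Finset.mem_Icc.mp hl with ⟨hl1, hl2⟩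
      rcases eq_or_lt_of_le hl2 with h | h
      · rw [h]; exact h2
      · exact (ih ω x).mp h1 l (Finset.mem_Icc.mpr ⟨hl1, Nat.lt_succ_iff.mp h⟩)
    · intro h
      refine ⟨(ih ω x).mpr fun l hl => h l ?_, h (i + 1) ?_⟩
      · rcases Finset.mem_Icc.mp hl with ⟨h1, h2⟩
        exact Finset.mem_Icc.mpr ⟨h1, h2.trans (Nat.le_succ i)⟩
      · exact Finset.mem_Icc.mpr ⟨Nat.one_le_iff_ne_zero.mpr (Nat.succ_ne_zero i), le_rfl⟩

lemma tz_measMem (hmeas : ∀ iv, Measurable (sample iv))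
    (hA0 : ∀ ω, A 0 ω = Finset.univ)
    (hAsucc : ∀ i ω v, v ∈ A (i + 1) ω ↔ v ∈ A i ω ∧ sample (i + 1, v) ω = true)
    (i : ℕ) (x : V) : MeasurableSet {ω | x ∈ A i ω} := by
  have h : {ω | x ∈ A i ω} = ⋂ l ∈ Finset.Icc 1 i, {ω | sample (l, x) ω = true} := by
    ext ω
    simp only [Set.mem_setOf_eq, Set.mem_iInter, tz_memA sample A hA0 hAsucc i ω x]
  rw [h]
  exact Finset.measurableSet_biInter _ fun l _ =>
    (hmeas (l, x)) (measurableSet_singleton true)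

lemma tz_measEq (hmeas : ∀ iv, Measurable (sample iv))
    (hA0 : ∀ ω, A 0 ω = Finset.univ)
    (hAsucc : ∀ i ω v, v ∈ A (i + 1) ω ↔ v ∈ A i ω ∧ sample (i + 1, v) ω = true)
    (i : ℕ) (S : Finset V) : MeasurableSet {ω | A i ω = S} := by
  have h : {ω | A i ω = S}
      = ⋂ x ∈ (Finset.univ : Finset V),
          (if x ∈ S then {ω | x ∈ A i ω} else {ω | x ∈ A i ω}ᶜ) := by
    ext ω
    simp only [Set.mem_setOf_eq, Set.mem_iInter, Finset.ext_iff]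
    constructor
    · intro h x _
      by_cases hx : x ∈ S <;> simp [hx, h x]
    · intro h x
      have := h x (Finset.mem_univ x)
      by_cases hx : x ∈ S <;> simp [hx] at this <;> simp [hx, this]
  rw [h]
  refine Finset.measurableSet_biInter _ fun x _ => ?_
  by_cases hx : x ∈ S <;> simp only [hx, if_true, if_false]
  · exact tz_measMem sample A hmeas hA0 hAsucc i x
  · exact (tz_measMem sample A hmeas hA0 hAsucc i x).compl

end Aux

section Core

variable {V Ω : Type*} [Fintype V] [MeasurableSpace Ω]

/-- Core estimate: the expected size of `B_i(u)` is at most `1/p`. -/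
lemma tz_core (μ : Measure Ω) [IsProbabilityMeasure μ]
    (d : V → V → ℝ≥0∞) (p : ℝ≥0∞) (hp1 : p ≤ 1)
    (sample : ℕ × V → Ω → Bool)
    (hmeas : ∀ iv, Measurable (sample iv))
    (hber : ∀ iv, μ {ω | sample iv ω = true} = p)
    (hindep : ProbabilityTheory.iIndepFun sample μ)
    (A : ℕ → Ω → Finset V)
    (hA0 : ∀ ω, A 0 ω = Finset.univ)
    (hAsucc : ∀ i ω v, v ∈ A (i + 1) ω ↔ v ∈ A i ω ∧ sample (i + 1, v) ω = true)
    (u : V) (hinj : ∀ x y : V, d u x = d u y → x = y) (i : ℕ) :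
    ∫⁻ ω, (((A i ω).filter
        (fun x => d u x < distToFinset d (A (i + 1) ω) u)).card : ℝ≥0∞) ∂μ ≤ p⁻¹ := by
  classical
  set q : ℝ≥0∞ := 1 - p with hq
  -- T S x : vertices of S at distance ≤ d u x
  set T : Finset V → V → Finset V := fun S x => S.filter (fun y => d u y ≤ d u x) with hT
  set E : Finset V → Set Ω := fun S => {ω | A i ω = S} with hE
  set G : Finset V → V → Set Ω :=
    fun S x => {ω | ∀ y ∈ T S x, sample (i + 1, y) ω = false} with hG
  have hmeasE : ∀ S, MeasurableSet (E S) := fun S =>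
    tz_measEq sample A hmeas hA0 hAsucc i S
  have hmeasG : ∀ S x, MeasurableSet (G S x) := by
    intro S x
    have h : G S x = ⋂ y ∈ T S x, {ω | sample (i + 1, y) ω = false} := by
      ext ω; simp [hG]
    rw [h]
    exact Finset.measurableSet_biInter _ fun y _ =>
      (hmeas (i + 1, y)) (measurableSet_singleton false)
  -- Step A: pointwise bound by the "all earlier samples fail" set
  have hpt : ∀ ω, (((A i ω).filter
      (fun x => d u x < distToFinset d (A (i + 1) ω) u)).card : ℝ≥0∞)
      ≤ (((A i ω).filter (fun x => ω ∈ G (A i ω) x)).card : ℝ≥0∞) := by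
    intro ω
    have hsub : (A i ω).filter (fun x => d u x < distToFinset d (A (i + 1) ω) u)
        ⊆ (A i ω).filter (fun x => ω ∈ G (A i ω) x) := by
      intro x hx
      rcases Finset.mem_filter.mp hx with ⟨hxA, hxlt⟩
      refine Finset.mem_filter.mpr ⟨hxA, ?_⟩
      intro y hy
      rcases Finset.mem_filter.mp hy with ⟨hyA, hyle⟩
      by_contra hcon
      have hys : sample (i + 1, y) ω = true := by
        cases hsy : sample (i + 1, y) ω
        · exact absurd hsy hcon
        · rfl
      have hyA1 : y ∈ A (i + 1) ω := (hAsucc i ω y).mpr ⟨hyA, hys⟩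
      have hle : distToFinset d (A (i + 1) ω) u ≤ d u y := by
        unfold distToFinset
        exact iInf₂_le y hyA1
      exact absurd hxlt (not_lt.mpr (le_trans hle hyle))
    exact_mod_cast Nat.cast_le.mpr (Finset.card_le_card hsub)
  -- Step B: decompose as a double sum of indicators
  have hdecomp : ∀ ω, (((A i ω).filter (fun x => ω ∈ G (A i ω) x)).card : ℝ≥0∞)
      = ∑ S : Finset V, ∑ x ∈ S, (E S ∩ G S x).indicator (fun _ => (1 : ℝ≥0∞)) ω := by
    intro ω
    rw [Finset.sum_eq_single (A i ω)]
    · have h1 : ∀ x ∈ A i ω,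
          (E (A i ω) ∩ G (A i ω) x).indicator (fun _ => (1 : ℝ≥0∞)) ω
            = if ω ∈ G (A i ω) x then 1 else 0 := by
        intro x _
        by_cases hGx : ω ∈ G (A i ω) x
        · simp [Set.indicator_apply, hGx, hE]
        · simp [Set.indicator_apply, hGx]
      rw [Finset.sum_congr rfl h1]
      rw [Finset.card_filter]
      push_cast
      rfl
    · intro S _ hS
      refine Finset.sum_eq_zero fun x _ => ?_
      have : ω ∉ E S := fun hmem => hS (Eq.symm hmem)
      simp [Set.indicator_apply, Set.mem_inter_iff, this]
    · intro h
      exact absurd (Finset.mem_univ (A i ω)) h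
  -- independence of levels ≤ i and level i+1
  have hEG : ∀ S x, μ (E S ∩ G S x) = μ (E S) * μ (G S x) := by
    intro S x
    set Sfin : Finset (ℕ × V) := Finset.Icc 1 i ×ˢ Finset.univ with hSfin
    set Tfin : Finset (ℕ × V) := {i + 1} ×ˢ Finset.univ with hTfin
    have hdisj : Disjoint Sfin Tfin := by
      rw [Finset.disjoint_left]
      rintro ⟨l, v⟩ hS hT
      rw [hSfin, Finset.mem_product, Finset.mem_Icc] at hS
      rw [hTfin, Finset.mem_product, Finset.mem_singleton] at hT
      omega
    have hIF := hindep.indepFun_finset Sfin Tfin hdisj hmeas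
    set X : Ω → (↥Sfin → Bool) := fun ω jv => sample jv ω with hX
    set Y : Ω → (↥Tfin → Bool) := fun ω jv => sample jv ω with hY
    set MS : Set (↥Sfin → Bool) :=
      {g | ∀ z : V, z ∈ S ↔ ∀ jv : ↥Sfin, (jv : ℕ × V).2 = z → g jv = true} with hMS
    set MT : Set (↥Tfin → Bool) :=
      {g | ∀ jv : ↥Tfin, (jv : ℕ × V).2 ∈ T S x → g jv = false} with hMT
    have hES : E S = X ⁻¹' MS := by
      ext ω
      simp only [hE, Set.mem_setOf_eq, Set.mem_preimage, hMS, hX, Finset.ext_iff]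
      constructor
      · intro h z
        rw [← h z, tz_memA sample A hA0 hAsucc i ω z]
        constructor
        · rintro h' ⟨⟨l, w⟩, hjv⟩ hw
          simp only [hSfin, Finset.mem_product, Finset.mem_Icc] at hjv
          dsimp at hw; subst hw
          exact h' l (Finset.mem_Icc.mpr hjv.1)
        · intro h' l hl
          exact h' ⟨(l, z), by
            simp only [hSfin, Finset.mem_product]
            exact ⟨hl, Finset.mem_univ z⟩⟩ rfl
      · intro h z
        rw [h z, tz_memA sample A hA0 hAsucc i ω z]
        constructor
        · rintro h' ⟨⟨l, w⟩, hjv⟩ hw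
          simp only [hSfin, Finset.mem_product, Finset.mem_Icc] at hjv
          dsimp at hw; subst hw
          exact h' l (Finset.mem_Icc.mpr hjv.1)
        · intro h' l hl
          exact h' ⟨(l, z), by
            simp only [hSfin, Finset.mem_product]
            exact ⟨hl, Finset.mem_univ z⟩⟩ rfl
    have hGT : G S x = Y ⁻¹' MT := by
      ext ω
      simp only [hG, Set.mem_setOf_eq, Set.mem_preimage, hMT, hY]
      constructor
      · rintro h ⟨⟨l, w⟩, hjv⟩ hw
        simp only [hTfin, Finset.mem_product, Finset.mem_singleton] at hjv
        dsimp at hw ⊢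
        rw [hjv.1]
        exact h w hw
      · intro h y hy
        exact h ⟨(i + 1, y), by
          simp only [hTfin, Finset.mem_product]
          exact ⟨Finset.mem_singleton_self _, Finset.mem_univ y⟩⟩ hy
    rw [hES, hGT]
    exact hIF.measure_inter_preimage_eq_mul MS MT
      (Set.toFinite MS).measurableSet (Set.toFinite MT).measurableSet
  -- probability of the "all fail" event
  have hGprob : ∀ S x, μ (G S x) = q ^ (T S x).card := by
    intro S x
    have hinjpair : Function.Injective (fun y : V => ((i + 1 : ℕ), y)) := by
      intro a b hab
      simpa using congrArg Prod.snd hab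
    have h : G S x = ⋂ jv ∈ (T S x).image (fun y => ((i + 1 : ℕ), y)),
        sample jv ⁻¹' ({false} : Set Bool) := by
      ext ω
      simp only [hG, Set.mem_setOf_eq, Set.mem_iInter, Finset.mem_image, Set.mem_preimage,
        Set.mem_singleton_iff]
      constructor
      · rintro h jv ⟨y, hy, rfl⟩
        exact h y hy
      · intro h y hy
        exact h (i + 1, y) ⟨y, hy, rfl⟩
    rw [h]
    rw [hindep.measure_inter_preimage_eq_mul ((T S x).image (fun y => ((i + 1 : ℕ), y)))
      (sets := fun _ => ({false} : Set Bool)) (fun _ _ => measurableSet_singleton false)]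
    have hfalse : ∀ jv : ℕ × V, μ (sample jv ⁻¹' ({false} : Set Bool)) = q := by
      intro jv
      have hc : sample jv ⁻¹' ({false} : Set Bool) = {ω | sample jv ω = true}ᶜ := by
        ext ω
        simp only [Set.mem_preimage, Set.mem_singleton_iff, Set.mem_compl_iff, Set.mem_setOf_eq]
        cases h : sample jv ω <;> simp
      have hm : MeasurableSet {ω | sample jv ω = true} :=
        (hmeas jv) (measurableSet_singleton true)
      rw [hc, prob_compl_eq_one_sub hm, hber]
    rw [Finset.prod_congr rfl fun jv _ => hfalse jv, Finset.prod_const,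
      Finset.card_image_of_injective _ hinjpair]
  -- geometric series bound
  have hgeo : ∀ S : Finset V, ∑ x ∈ S, q ^ (T S x).card ≤ p⁻¹ := by
    intro S
    set r : V → ℕ := fun x => (T S x).card with hr
    have hr1 : ∀ x ∈ S, 1 ≤ r x := by
      intro x hx
      have : x ∈ T S x := Finset.mem_filter.mpr ⟨hx, le_rfl⟩
      exact Finset.card_pos.mpr ⟨x, this⟩
    have hmono : ∀ a ∈ S, ∀ b ∈ S, d u a < d u b → r a < r b := by
      intro a ha b hb hab
      apply Finset.card_lt_card
      rw [Finset.ssubset_iff_of_subset]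
      · exact ⟨b, Finset.mem_filter.mpr ⟨hb, le_rfl⟩,
          fun hbT => absurd (Finset.mem_filter.mp hbT).2 (not_le.mpr hab)⟩
      · intro z hz
        rcases Finset.mem_filter.mp hz with ⟨hzS, hzle⟩
        exact Finset.mem_filter.mpr ⟨hzS, hzle.trans hab.le⟩
    have hrinj : ∀ x ∈ S, ∀ y ∈ S, r x = r y → x = y := by
      intro x hx y hy hxy
      rcases lt_trichotomy (d u x) (d u y) with h | h | h
      · exact absurd hxy (Nat.ne_of_lt (hmono x hx y hy h))
      · exact hinj x y h
      · exact absurd hxy.symm (Nat.ne_of_lt (hmono y hy x hx h))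
    calc ∑ x ∈ S, q ^ r x = ∑ j ∈ S.image r, q ^ j := (Finset.sum_image hrinj).symm
      _ = ∑ j ∈ S.image r, q * q ^ (j - 1) := by
          refine Finset.sum_congr rfl fun j hj => ?_
          rcases Finset.mem_image.mp hj with ⟨x, hx, rfl⟩
          have h1 := hr1 x hx
          conv_lhs => rw [show r x = (r x - 1) + 1 by omega]
          rw [pow_succ, mul_comm]
      _ = q * ∑ j ∈ S.image r, q ^ (j - 1) := by rw [Finset.mul_sum]
      _ = q * ∑ m ∈ (S.image r).image (· - 1), q ^ m := by
          congr 1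
          refine (Finset.sum_image ?_).symm
          intro a ha b hb hab
          rcases Finset.mem_image.mp ha with ⟨x, hx, rfl⟩
          rcases Finset.mem_image.mp hb with ⟨y, hy, rfl⟩
          have := hr1 x hx; have := hr1 y hy
          dsimp only at hab
          omega
      _ ≤ q * ∑' m : ℕ, q ^ m := by
          gcongr
          exact ENNReal.sum_le_tsum _
      _ = q * (1 - q)⁻¹ := by rw [ENNReal.tsum_geometric]
      _ = q * p⁻¹ := by rw [hq, ENNReal.sub_sub_cancel one_ne_top hp1]
      _ ≤ 1 * p⁻¹ := by gcongr; exact tsub_le_self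
      _ = p⁻¹ := one_mul _
  -- partition of Ω by the value of A i
  have hpart : ∑ S : Finset V, μ (E S) = 1 := by
    have hcov : ⋃ S ∈ (Finset.univ : Finset (Finset V)), E S = Set.univ := by
      ext ω
      simp only [Set.mem_iUnion, Set.mem_univ, iff_true]
      exact ⟨A i ω, Finset.mem_univ _, rfl⟩
    have hdisj : Set.Pairwise ↑(Finset.univ : Finset (Finset V)) (Function.onFun Disjoint E) := by
      intro S _ S' _ hSS'
      rw [Function.onFun, Set.disjoint_left]
      intro ω h1 h2
      exact hSS' ((h1 : A i ω = S) ▸ (h2 : A i ω = S'))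
    have h := measure_biUnion_finset (μ := μ) hdisj fun S _ => hmeasE S
    rw [hcov] at h
    rw [← h, measure_univ]
  -- put everything together
  calc ∫⁻ ω, (((A i ω).filter
        (fun x => d u x < distToFinset d (A (i + 1) ω) u)).card : ℝ≥0∞) ∂μ
      ≤ ∫⁻ ω, (((A i ω).filter (fun x => ω ∈ G (A i ω) x)).card : ℝ≥0∞) ∂μ :=
        lintegral_mono hpt
    _ = ∫⁻ ω, ∑ S : Finset V, ∑ x ∈ S,
          (E S ∩ G S x).indicator (fun _ => (1 : ℝ≥0∞)) ω ∂μ := by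
        exact lintegral_congr hdecomp
    _ = ∑ S : Finset V, ∑ x ∈ S, μ (E S ∩ G S x) := by
        rw [lintegral_finset_sum _ fun S _ => Finset.measurable_sum _ fun x _ =>
          measurable_const.indicator ((hmeasE S).inter (hmeasG S x))]
        refine Finset.sum_congr rfl fun S _ => ?_
        rw [lintegral_finset_sum _ fun x _ =>
          measurable_const.indicator ((hmeasE S).inter (hmeasG S x))]
        refine Finset.sum_congr rfl fun x _ => ?_
        rw [lintegral_indicator_const ((hmeasE S).inter (hmeasG S x)), one_mul]
    _ = ∑ S : Finset V, μ (E S) * ∑ x ∈ S, q ^ (T S x).card := by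
        refine Finset.sum_congr rfl fun S _ => ?_
        rw [Finset.mul_sum]
        exact Finset.sum_congr rfl fun x _ => by rw [hEG S x, hGprob S x]
    _ ≤ ∑ S : Finset V, μ (E S) * p⁻¹ := by
        gcongr with S
        exact hgeo S
    _ = p⁻¹ := by rw [← Finset.sum_mul, hpart, one_mul]

end Core

/-- Expected bunch size in the Thorup-Zwick random sampling: if each vertex of
`A_{i-1}` is placed in `A_i` independently with probability `p = n^{-1/k}`, then for
any fixed vertex `u` and `0 ≤ i ≤ k-2` the expected size of
`B_i(u) = { w ∈ A_i : d(u,w) < d(u,A_{i+1}) }` is at most `1/p = n^{1/k}`, and the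
expected total bunch size (with `B_{k-1}(u) = A_{k-1}`) is at most
`k·n^{1/k} + E[|A_{k-1}|]`. -/
theorem stmt4 {V Ω : Type*} [Fintype V] [MeasurableSpace Ω]
    (μ : Measure Ω) [IsProbabilityMeasure μ]
    (d : V → V → ℝ≥0∞) (k : ℕ) (hk : 2 ≤ k)
    (n : ℕ) (hn : n = Fintype.card V) (hn1 : 1 ≤ n)
    (sample : ℕ × V → Ω → Bool)
    (hmeas : ∀ iv, Measurable (sample iv))
    -- each inclusion indicator is Bernoulli with probability p = n^{-1/k}
    (hber : ∀ iv, μ {ω | sample iv ω = true} = (n : ℝ≥0∞) ^ (-(1 : ℝ) / k))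
    -- the indicators are mutually independent
    (hindep : ProbabilityTheory.iIndepFun sample μ)
    (A : ℕ → Ω → Finset V)
    (hA0 : ∀ ω, A 0 ω = Finset.univ)
    (hAsucc : ∀ i ω v, v ∈ A (i + 1) ω ↔ v ∈ A i ω ∧ sample (i + 1, v) ω = true)
    (u : V)
    -- distances from u are distinct (ties broken consistently)
    (hinj : ∀ x y : V, d u x = d u y → x = y) :
    (∀ i, i ≤ k - 2 →
      ∫⁻ ω, (((A i ω).filter
          (fun x => d u x < distToFinset d (A (i + 1) ω) u)).card : ℝ≥0∞) ∂μ ≤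
        (n : ℝ≥0∞) ^ ((1 : ℝ) / k)) ∧
    ∫⁻ ω, (((((Finset.range (k - 1)).biUnion
          (fun i => (A i ω).filter
            (fun x => d u x < distToFinset d (A (i + 1) ω) u))) ∪
          A (k - 1) ω).card : ℕ) : ℝ≥0∞) ∂μ ≤
      (k : ℝ≥0∞) * (n : ℝ≥0∞) ^ ((1 : ℝ) / k) + ∫⁻ ω, ((A (k - 1) ω).card : ℝ≥0∞) ∂μ := by
  classical
  set p : ℝ≥0∞ := (n : ℝ≥0∞) ^ (-(1 : ℝ) / k) with hp
  have hkpos : (0 : ℝ) < k := by exact_mod_cast (by omega : 0 < k)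
  have hp1 : p ≤ 1 := by
    rcases eq_or_lt_of_le (by exact_mod_cast hn1 : (1 : ℝ≥0∞) ≤ n) with h' | h'
    · rw [hp, ← h', ENNReal.one_rpow]
    · exact le_of_lt (ENNReal.rpow_lt_one_of_one_lt_of_neg h'
        (div_neg_of_neg_of_pos (by norm_num) hkpos))
  have hpinv : p⁻¹ = (n : ℝ≥0∞) ^ ((1 : ℝ) / k) := by
    rw [hp, neg_div, ENNReal.rpow_neg, inv_inv]
  have hcore : ∀ i, ∫⁻ ω, (((A i ω).filter
      (fun x => d u x < distToFinset d (A (i + 1) ω) u)).card : ℝ≥0∞) ∂μ ≤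
      (n : ℝ≥0∞) ^ ((1 : ℝ) / k) := by
    intro i
    rw [← hpinv]
    exact tz_core μ d p hp1 sample hmeas (fun iv => hber iv) hindep A hA0 hAsucc u hinj i
  refine ⟨fun i _ => hcore i, ?_⟩
  have hmB : ∀ i, Measurable (fun ω => (((A i ω).filter
      (fun x => d u x < distToFinset d (A (i + 1) ω) u)).card : ℝ≥0∞)) := by
    intro i
    exact tz_measurable_of_fin (fun ω => (A i ω, A (i + 1) ω))
      (fun a => by
        have h : {ω | (A i ω, A (i + 1) ω) = a}
            = {ω | A i ω = a.1} ∩ {ω | A (i + 1) ω = a.2} := by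
          ext ω; simp [Prod.ext_iff]
        rw [h]
        exact (tz_measEq sample A hmeas hA0 hAsucc i a.1).inter
          (tz_measEq sample A hmeas hA0 hAsucc (i + 1) a.2))
      (fun a => (((a.1.filter (fun x => d u x < distToFinset d a.2 u)).card : ℕ) : ℝ≥0∞))
  have hmA : Measurable (fun ω => ((A (k - 1) ω).card : ℝ≥0∞)) :=
    tz_measurable_of_fin (fun ω => A (k - 1) ω)
      (fun S => tz_measEq sample A hmeas hA0 hAsucc (k - 1) S)
      (fun S => ((S.card : ℕ) : ℝ≥0∞))
  calc ∫⁻ ω, (((((Finset.range (k - 1)).biUnion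
          (fun i => (A i ω).filter
            (fun x => d u x < distToFinset d (A (i + 1) ω) u))) ∪
          A (k - 1) ω).card : ℕ) : ℝ≥0∞) ∂μ
      ≤ ∫⁻ ω, ((∑ i ∈ Finset.range (k - 1), (((A i ω).filter
          (fun x => d u x < distToFinset d (A (i + 1) ω) u)).card : ℝ≥0∞))
          + ((A (k - 1) ω).card : ℝ≥0∞)) ∂μ := by
        apply lintegral_mono
        intro ω
        have h1 : (((Finset.range (k - 1)).biUnion
            (fun i => (A i ω).filter
              (fun x => d u x < distToFinset d (A (i + 1) ω) u))) ∪
            A (k - 1) ω).card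
            ≤ (∑ i ∈ Finset.range (k - 1), ((A i ω).filter
              (fun x => d u x < distToFinset d (A (i + 1) ω) u)).card)
              + (A (k - 1) ω).card :=
          (Finset.card_union_le _ _).trans
            (add_le_add_left (Finset.card_biUnion_le) _)
        dsimp only
        exact_mod_cast h1
    _ = (∑ i ∈ Finset.range (k - 1), ∫⁻ ω, (((A i ω).filter
          (fun x => d u x < distToFinset d (A (i + 1) ω) u)).card : ℝ≥0∞) ∂μ)
          + ∫⁻ ω, ((A (k - 1) ω).card : ℝ≥0∞) ∂μ := by
        rw [lintegral_add_right _ hmA, lintegral_finset_sum _ fun i _ => hmB i]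
    _ ≤ (∑ _i ∈ Finset.range (k - 1), (n : ℝ≥0∞) ^ ((1 : ℝ) / k))
          + ∫⁻ ω, ((A (k - 1) ω).card : ℝ≥0∞) ∂μ :=
        add_le_add_left (Finset.sum_le_sum fun i _ => hcore i) _
    _ ≤ (k : ℝ≥0∞) * (n : ℝ≥0∞) ^ ((1 : ℝ) / k)
          + ∫⁻ ω, ((A (k - 1) ω).card : ℝ≥0∞) ∂μ := by
        apply add_le_add_left
        rw [Finset.sum_const, Finset.card_range, nsmul_eq_mul]
        exact mul_le_mul_left (by exact_mod_cast Nat.sub_le k 1) _
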